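/- Let x be a real sequence whose set of statistical cluster points Γ_x is a discrete set. Then the set of statistical limit points of x equals Γ_x. -/

import Mathlib

open Filter Topology Set
open scoped ENNReal

/-- An ideal on ℕ: contains all finite sets, closed under subsets and finite
unions, and proper. -/
def IsIdeal (I : Set (Set ℕ)) : Prop :=
  (∀ A : Set ℕ, A.Finite → A ∈ I) ∧
  (∀ A B : Set ℕ, A ⊆ B → B ∈ I → A ∈ I) ∧
  (∀ A B : Set ℕ, A ∈ I → B ∈ I → A ∪ B ∈ I) ∧
  (Set.univ : Set ℕ) ∉ I

/-- `ℓ` is an `I`-limit point of `x`: some subsequence indexed by a set not in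
`I` converges to `ℓ`. -/
def ILimitPoint {X : Type*} [TopologicalSpace X] (I : Set (Set ℕ)) (x : ℕ → X) (ℓ : X) : Prop :=
  ∃ A : Set ℕ, A ∉ I ∧ Tendsto x (atTop ⊓ 𝓟 A) (𝓝 ℓ)

/-- `ℓ` is an `I`-cluster point of `x`. -/
def IClusterPoint {X : Type*} [TopologicalSpace X] (I : Set (Set ℕ)) (x : ℕ → X) (ℓ : X) : Prop :=
  ∀ U ∈ 𝓝 ℓ, {n | x n ∈ U} ∉ I

/-- A lower semicontinuous submeasure on ℕ. -/
def IsLSCSubmeasure (φ : Set ℕ → ℝ≥0∞) : Prop :=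
  φ ∅ = 0 ∧ (∀ A B : Set ℕ, A ⊆ B → φ A ≤ φ B) ∧
  (∀ A B : Set ℕ, φ (A ∪ B) ≤ φ A + φ B) ∧
  (∀ A : Set ℕ, Tendsto (fun n => φ (A ∩ Set.Iio n)) atTop (𝓝 (φ A)))

/-- `‖A‖_φ = lim_n φ(A \ {0,…,n-1})`, the limit of an antitone sequence,
realized as an infimum. -/
noncomputable def phiNorm (φ : Set ℕ → ℝ≥0∞) (A : Set ℕ) : ℝ≥0∞ :=
  ⨅ n : ℕ, φ (A \ Set.Iio n)

/-- The ideal of sets of asymptotic density zero. -/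
def I0 : Set (Set ℕ) :=
  {S : Set ℕ | Tendsto (fun n => (Nat.card ↥(S ∩ Set.Iio n) : ℝ) / n) atTop (𝓝 0)}

/-- `u(ℓ) := lim_k ‖{n : x n ∈ U_k}‖_φ` along a decreasing local base at `ℓ`;
its value is independent of the base and equals the infimum over all
neighborhoods. -/
noncomputable def uFun {X : Type*} [TopologicalSpace X] (φ : Set ℕ → ℝ≥0∞)
    (x : ℕ → X) (ℓ : X) : ℝ≥0∞ :=
  ⨅ U ∈ 𝓝 ℓ, phiNorm φ {n | x n ∈ U}

/-- Isolated points of a set. -/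
def isolatedPts {X : Type*} [TopologicalSpace X] (B : Set X) : Set X :=
  {b ∈ B | ∃ U ∈ 𝓝 b, U ∩ B = {b}}


noncomputable def densF (A : Set ℕ) (n : ℕ) : ℝ :=
  (Nat.card ↥(A ∩ Set.Iio n) : ℝ) / n

lemma mem_I0_iff {A : Set ℕ} : A ∈ I0 ↔ Tendsto (densF A) atTop (𝓝 0) := Iff.rfl

lemma densF_nonneg (A : Set ℕ) (n : ℕ) : 0 ≤ densF A n := by
  unfold densF; positivity

lemma card_inter_mono {A B : Set ℕ} (h : A ⊆ B) (n : ℕ) :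
    Nat.card ↥(A ∩ Set.Iio n) ≤ Nat.card ↥(B ∩ Set.Iio n) := by
  rw [Nat.card_coe_set_eq, Nat.card_coe_set_eq]
  exact Set.ncard_le_ncard (Set.inter_subset_inter_left _ h)
    ((Set.finite_Iio n).subset (Set.inter_subset_right))

lemma densF_mono {A B : Set ℕ} (h : A ⊆ B) (n : ℕ) : densF A n ≤ densF B n := by
  unfold densF
  gcongr
  exact_mod_cast card_inter_mono h n

lemma densF_union (A B : Set ℕ) (n : ℕ) :
    densF (A ∪ B) n ≤ densF A n + densF B n := by
  unfold densF
  rw [← add_div]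
  gcongr
  rw [Set.union_inter_distrib_right]
  simp only [Nat.card_coe_set_eq]
  exact_mod_cast Set.ncard_union_le _ _

lemma I0_mono {A B : Set ℕ} (h : A ⊆ B) (hB : B ∈ I0) : A ∈ I0 := by
  rw [mem_I0_iff] at *
  exact squeeze_zero (densF_nonneg A) (densF_mono h) hB

lemma I0_union {A B : Set ℕ} (hA : A ∈ I0) (hB : B ∈ I0) : A ∪ B ∈ I0 := by
  rw [mem_I0_iff] at *
  have := hA.add hB
  rw [add_zero] at this
  exact squeeze_zero (densF_nonneg _) (densF_union A B) this

lemma I0_finite {A : Set ℕ} (h : A.Finite) : A ∈ I0 := by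
  rw [mem_I0_iff]
  refine squeeze_zero (g := fun n : ℕ => (A.ncard : ℝ) / n) (densF_nonneg A) ?_ ?_
  · intro n
    show (Nat.card ↥(A ∩ Set.Iio n) : ℝ) / n ≤ (A.ncard : ℝ) / n
    gcongr
    rw [Nat.card_coe_set_eq]
    exact_mod_cast Set.ncard_le_ncard Set.inter_subset_left h
  · exact tendsto_const_div_atTop_nhds_zero_nat _

lemma not_I0_elim {A : Set ℕ} (hA : A ∉ I0) :
    ∃ ε > (0:ℝ), ∀ N, ∃ n ≥ N, ε ≤ densF A n := by
  by_contra h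
  push_neg at h
  apply hA
  rw [mem_I0_iff, Metric.tendsto_atTop]
  intro ε hε
  obtain ⟨N, hN⟩ := h ε hε
  exact ⟨N, fun n hn => by
    rw [Real.dist_eq, sub_zero, abs_of_nonneg (densF_nonneg A n)]
    exact hN n hn⟩

lemma I0_biUnion {ι : Type*} (s : Finset ι) (f : ι → Set ℕ)
    (h : ∀ i ∈ s, f i ∈ I0) : (⋃ i ∈ s, f i) ∈ I0 := by
  classical
  induction s using Finset.induction with
  | empty => simpa using I0_finite Set.finite_empty
  | @insert a s ha ih =>
    rw [Finset.set_biUnion_insert]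
    exact I0_union (h a (Finset.mem_insert_self a s))
      (ih fun i hi => h i (Finset.mem_insert_of_mem hi))

lemma compact_no_cluster {x : ℕ → ℝ} {K : Set ℝ} (hK : IsCompact K)
    (h : ∀ p ∈ K, ¬ IClusterPoint I0 x p) : {n | x n ∈ K} ∈ I0 := by
  have hU : ∀ p ∈ K, ∃ U ∈ 𝓝 p, {n | x n ∈ U} ∈ I0 := by
    intro p hp
    have := h p hp
    unfold IClusterPoint at this
    push_neg at this
    obtain ⟨U, hU1, hU2⟩ := this
    exact ⟨U, hU1, hU2⟩
  choose! U hU1 hU2 using hU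
  obtain ⟨t, ht1, ht2⟩ := hK.elim_nhds_subcover U (fun p hp => hU1 p hp)
  apply I0_mono (B := ⋃ p ∈ t, {n | x n ∈ U p})
  · intro n hn
    obtain ⟨p, hp1, hp2⟩ := Set.mem_iUnion₂.mp (ht2 hn)
    exact Set.mem_iUnion₂.mpr ⟨p, hp1, hp2⟩
  · exact I0_biUnion t _ fun p hp => hU2 p (ht1 p hp)

/-- if the set of statistical cluster points of a real sequence is
discrete, it equals the set of statistical limit points. -/
theorem stmt13 (x : ℕ → ℝ)
    (hdisc : ∀ ℓ ∈ {p : ℝ | IClusterPoint I0 x p},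
      ∃ U ∈ 𝓝 ℓ, U ∩ {p : ℝ | IClusterPoint I0 x p} = {ℓ}) :
    {ℓ : ℝ | ILimitPoint I0 x ℓ} = {ℓ : ℝ | IClusterPoint I0 x ℓ} := by
  ext ℓ
  simp only [Set.mem_setOf_eq]
  constructor
  · rintro ⟨A, hA, hT⟩ U hU hUI
    apply hA
    have hmem : {n | x n ∈ U} ∈ atTop ⊓ 𝓟 A := hT hU
    rw [Filter.mem_inf_principal, Filter.mem_atTop_sets] at hmem
    obtain ⟨N, hN⟩ := hmem
    apply I0_mono (B := {n | x n ∈ U} ∪ Set.Iio N)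
    · intro n hn
      by_cases h : N ≤ n
      · exact Or.inl (hN n h hn)
      · exact Or.inr (by simpa using lt_of_not_ge h)
    · exact I0_union hUI (I0_finite (Set.finite_Iio N))
  · intro hc
    obtain ⟨U, hUnb, hUiso⟩ := hdisc ℓ hc
    obtain ⟨δ, hδ, hball⟩ := Metric.nhds_basis_closedBall.mem_iff.mp hUnb
    have hA : {n | x n ∈ Metric.closedBall ℓ δ} ∉ I0 :=
      hc _ (Metric.closedBall_mem_nhds ℓ hδ)
    obtain ⟨ε, hε, hfreq⟩ := not_I0_elim hA
    set D : ℕ → Set ℕ := fun k => {n | x n ∈ Metric.ball ℓ (δ / (k+1))} with hD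
    have hC : ∀ k : ℕ,
        {n | x n ∈ Metric.closedBall ℓ δ \ Metric.ball ℓ (δ/(k+1))} ∈ I0 := by
      intro k
      apply compact_no_cluster ((isCompact_closedBall ℓ δ).diff Metric.isOpen_ball)
      intro p hp hpc
      have : p ∈ U ∩ {p | IClusterPoint I0 x p} := ⟨hball hp.1, hpc⟩
      rw [hUiso] at this
      apply hp.2
      rw [this]
      exact Metric.mem_ball_self (by positivity)
    have key : ∀ k N : ℕ, ∃ n, N ≤ n ∧ ε/2 ≤ densF (D k) n := by
      intro k N
      have hCk := hC k
      rw [mem_I0_iff, Metric.tendsto_atTop] at hCk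
      obtain ⟨M, hM⟩ := hCk (ε/2) (by positivity)
      obtain ⟨n, hn1, hn2⟩ := hfreq (max N M)
      refine ⟨n, le_trans (le_max_left _ _) hn1, ?_⟩
      have h1 : densF {n | x n ∈ Metric.closedBall ℓ δ} n
          ≤ densF (D k) n
            + densF {m | x m ∈ Metric.closedBall ℓ δ \ Metric.ball ℓ (δ/(k+1))} n := by
        refine le_trans (densF_mono ?_ n) (densF_union _ _ n)
        intro m hm
        by_cases h : x m ∈ Metric.ball ℓ (δ/(k+1))
        · exact Or.inl h
        · exact Or.inr ⟨hm, h⟩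
      have h2 : densF {m | x m ∈ Metric.closedBall ℓ δ \ Metric.ball ℓ (δ/(k+1))} n
          < ε/2 := by
        have := hM n (le_trans (le_max_right _ _) hn1)
        rwa [Real.dist_eq, sub_zero, abs_of_nonneg (densF_nonneg _ _)] at this
      linarith
    let ns : ℕ → ℕ := fun k => Nat.rec (motive := fun _ => ℕ)
      (Classical.choose (key 0 0))
      (fun k prev => Classical.choose (key (k+1) (prev+1))) k
    have hns0 : ε/2 ≤ densF (D 0) (ns 0) := (Classical.choose_spec (key 0 0)).2
    have hnsS : ∀ k, ns k < ns (k+1) ∧ ε/2 ≤ densF (D (k+1)) (ns (k+1)) := by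
      intro k
      have h := Classical.choose_spec (key (k+1) (ns k + 1))
      exact ⟨Nat.lt_of_succ_le h.1, h.2⟩
    have hmono : StrictMono ns := strictMono_nat_of_lt_succ fun k => (hnsS k).1
    have hdens : ∀ k, ε/2 ≤ densF (D k) (ns k) := by
      intro k
      cases k with
      | zero => exact hns0
      | succ k => exact (hnsS k).2
    refine ⟨⋃ k, D k ∩ Set.Iio (ns k), ?_, ?_⟩
    · intro hB
      rw [mem_I0_iff, Metric.tendsto_atTop] at hB
      obtain ⟨M, hM⟩ := hB (ε/2) (by positivity)
      have h1 : densF (⋃ k, D k ∩ Set.Iio (ns k)) (ns M) < ε/2 := by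
        have := hM (ns M) hmono.le_apply
        rwa [Real.dist_eq, sub_zero, abs_of_nonneg (densF_nonneg _ _)] at this
      have heq : densF (D M) (ns M) = densF (D M ∩ Set.Iio (ns M)) (ns M) := by
        unfold densF
        rw [Set.inter_assoc, Set.inter_self]
      have h2 : densF (D M ∩ Set.Iio (ns M)) (ns M)
          ≤ densF (⋃ k, D k ∩ Set.Iio (ns k)) (ns M) :=
        densF_mono (Set.subset_iUnion (fun k => D k ∩ Set.Iio (ns k)) M) _
      have := hdens M
      rw [heq] at this
      linarith
    · rw [Metric.tendsto_nhds]
      intro ε' hε'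
      obtain ⟨j, hj⟩ := exists_nat_gt (δ / ε')
      have hjlt : δ / (j+1) < ε' := by
        rw [div_lt_iff₀ (by positivity)]
        have h1 : δ / ε' < (j:ℝ)+1 := lt_of_lt_of_le hj (by linarith)
        calc δ = (δ/ε')*ε' := by field_simp
          _ < ((j:ℝ)+1)*ε' := mul_lt_mul_of_pos_right h1 hε'
          _ = ε' * ((j:ℝ)+1) := mul_comm _ _
      rw [eventually_inf_principal]
      filter_upwards [Filter.eventually_ge_atTop (ns j)] with m hm hmB
      obtain ⟨k, hk⟩ := Set.mem_iUnion.mp hmB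
      have hk1 : x m ∈ Metric.ball ℓ (δ/(k+1)) := hk.1
      have hk2 : m < ns k := hk.2
      have hjk : j < k := hmono.lt_iff_lt.mp (lt_of_le_of_lt hm hk2)
      have hdd : δ/((k:ℝ)+1) ≤ δ/((j:ℝ)+1) := by
        apply div_le_div_of_nonneg_left (le_of_lt hδ) (by positivity)
        exact_mod_cast Nat.succ_le_succ (le_of_lt hjk)
      calc dist (x m) ℓ < δ/((k:ℝ)+1) := hk1
        _ ≤ δ/((j:ℝ)+1) := hdd
        _ < ε' := hjlt
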